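/- Suppose (X_i, x_i) and (X, x) are proper geodesic spaces and for each i there is a basepoint-preserving σ_i-isometry f_i : X_i → X, where each σ_i is a first degree polynomial with non-negative coefficients and σ_i → 0 pointwise. Then (X_i, x_i) converges to (X, x) in the pointed Gromov-Hausdorff sense. -/

import Mathlib

noncomputable section
open Metric

variable {X : Type*} [MetricSpace X]

def IsEpsChain (ε : ℝ) (l : List X) : Prop :=
  l ≠ [] ∧ l.Chain' (fun a b => dist a b < ε)

def chainLength : List X → ℝ
  | a :: b :: t => dist a b + chainLength (b :: t)
  | _ => 0

def conc (α β : List X) : List X := α ++ β.tail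

def Insertion (α β : List X) : Prop :=
  ∃ (p s : List X) (x : X), p ≠ [] ∧ s ≠ [] ∧ α = p ++ s ∧ β = p ++ x :: s

def Move (ε : ℝ) (α β : List X) : Prop :=
  IsEpsChain ε α ∧ IsEpsChain ε β ∧ (Insertion α β ∨ Insertion β α)

def EpsHomotopic (ε : ℝ) : List X → List X → Prop :=
  Relation.ReflTransGen (Move ε)

def IsEpsNull (ε : ℝ) (l : List X) : Prop := ∃ x, EpsHomotopic ε l [x]

def IsGeodesicSpace (Y : Type*) [MetricSpace Y] : Prop :=
  ∀ x y : Y, ∃ γ : ℝ → Y, γ 0 = x ∧ γ (dist x y) = y ∧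
    ∀ s ∈ Set.Icc (0:ℝ) (dist x y), ∀ t ∈ Set.Icc (0:ℝ) (dist x y),
      dist (γ s) (γ t) = |s - t|

def ChainConnected (Y : Type*) [MetricSpace Y] : Prop :=
  ∀ ε > (0:ℝ), ∀ x y : Y, ∃ l : List Y, IsEpsChain ε l ∧ l.head? = some x ∧ l.getLast? = some y

theorem epsHomotopic_equiv (ε : ℝ) : Equivalence (EpsHomotopic (X := X) ε) := by
  refine ⟨fun _ => Relation.ReflTransGen.refl, ?_, fun h h' => h.trans h'⟩
  intro a b h
  unfold EpsHomotopic at h ⊢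
  induction h with
  | refl => exact Relation.ReflTransGen.refl
  | tail _ hbc ih => exact Relation.ReflTransGen.head ⟨hbc.2.1, hbc.1, hbc.2.2.symm⟩ ih

/-- `f` is a σ-isometry for the first degree polynomial `σ(t) = m t + b`:
distortion at most `σ`, and image a `σ(0)`-net. -/
def IsPolyIsometry {A B : Type*} [MetricSpace A] [MetricSpace B]
    (m c : ℝ) (f : A → B) : Prop :=
  (∀ x y : A, |dist x y - dist (f x) (f y)| ≤ m * dist x y + c) ∧
  ∀ z : B, ∃ w : A, dist z (f w) ≤ c

lemma pull_aux {Y : Type*} [MetricSpace Y] (hgeo : IsGeodesicSpace Y) (a b : Y) (r : ℝ)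
    (hr : 0 ≤ r) :
    ∃ w : Y, dist a w = min (dist a b) r ∧ dist w b = dist a b - min (dist a b) r := by
  obtain ⟨γ, h0, h1, h2⟩ := hgeo a b
  set t := min (dist a b) r with ht
  have ht0 : 0 ≤ t := le_min dist_nonneg hr
  have htd : t ≤ dist a b := min_le_left _ _
  refine ⟨γ t, ?_, ?_⟩
  · have h := h2 0 ⟨le_refl _, dist_nonneg⟩ t ⟨ht0, htd⟩
    rw [h0] at h
    rw [h, abs_of_nonpos (by linarith)]
    ring
  · have h := h2 t ⟨ht0, htd⟩ (dist a b) ⟨dist_nonneg, le_refl _⟩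
    rw [h1] at h
    rw [h, abs_of_nonpos (by linarith)]
    ring

/-- σᵢ-isometries with σᵢ → 0 between proper geodesic spaces give pointed
Gromov-Hausdorff convergence: for every `R > 1` and `s ∈ (0,1)`, eventually
there is a constant-`s`-isometry between the `R`-balls about the basepoints. -/
theorem statement5 {Xi : ℕ → Type*} [∀ i, MetricSpace (Xi i)] {Z : Type*} [MetricSpace Z]
    [∀ i, ProperSpace (Xi i)] [ProperSpace Z]
    (hgeo : ∀ i, IsGeodesicSpace (Xi i)) (hgeoZ : IsGeodesicSpace Z)
    (x : ∀ i, Xi i) (z : Z) (m c : ℕ → ℝ) (hm : ∀ i, 0 ≤ m i) (hc : ∀ i, 0 ≤ c i)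
    (f : ∀ i, Xi i → Z) (hbase : ∀ i, f i (x i) = z)
    (hiso : ∀ i, IsPolyIsometry (m i) (c i) (f i))
    (hm0 : Filter.Tendsto m Filter.atTop (nhds 0))
    (hc0 : Filter.Tendsto c Filter.atTop (nhds 0)) :
    ∀ R > (1:ℝ), ∀ s : ℝ, 0 < s → s < 1 → ∃ N : ℕ, ∀ i ≥ N,
      ∃ g : Metric.ball (x i) R → Metric.ball z R,
        (∀ p q, |dist p q - dist (g p) (g q)| ≤ s) ∧
        ∀ u : Metric.ball z R, ∃ w, dist u (g w) ≤ s := by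
  intro R hR s hs hs1
  set ε : ℝ := s / (8 * R + 26) with hεdef
  have hden : (0:ℝ) < 8 * R + 26 := by linarith
  have hε : 0 < ε := div_pos hs hden
  have hεs : ε * (8 * R + 26) = s := div_mul_cancel₀ s hden.ne'
  have hεhalf : ε ≤ 1 / 2 := by
    rw [hεdef, div_le_iff₀ hden]; nlinarith
  have h1 : ∀ᶠ i in Filter.atTop, m i < ε := hm0.eventually_lt_const hε
  have h2 : ∀ᶠ i in Filter.atTop, c i < ε := hc0.eventually_lt_const hε
  obtain ⟨N, hN⟩ := Filter.eventually_atTop.mp (h1.and h2)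
  refine ⟨N, fun i hi => ?_⟩
  obtain ⟨hMε, hCε⟩ := hN i hi
  have hM0 := hm i
  have hC0 := hc i
  have hdist : ∀ a b : Xi i, |dist a b - dist (f i a) (f i b)| ≤ m i * dist a b + c i :=
    (hiso i).1
  have hnet := (hiso i).2
  have hmR : m i * R ≤ ε * R := mul_le_mul_of_nonneg_right hMε.le (by linarith)
  -- construct the map g : ball (x i) R → ball z R
  have key : ∀ p : Metric.ball (x i) R, ∃ w : Z, w ∈ Metric.ball z R ∧
      dist w (f i p.1) ≤ m i * R + c i + ε := by
    intro p
    have hp : dist p.1 (x i) < R := Metric.mem_ball.mp p.2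
    have hp' : dist (x i) p.1 ≤ R := by rw [dist_comm]; exact hp.le
    have hz : dist z (f i p.1) ≤ R + m i * R + c i := by
      have h := hdist (x i) p.1
      rw [hbase i] at h
      have habs := (abs_le.mp h).1
      have hmd : m i * dist (x i) p.1 ≤ m i * R := mul_le_mul_of_nonneg_left hp' hM0
      linarith
    obtain ⟨w, hw1, hw2⟩ := pull_aux hgeoZ z (f i p.1) (R - ε) (by linarith)
    refine ⟨w, ?_, ?_⟩
    · rw [Metric.mem_ball, dist_comm, hw1]
      exact lt_of_le_of_lt (min_le_right _ _) (by linarith)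
    · rw [hw2]
      rcases le_total (dist z (f i p.1)) (R - ε) with h | h
      · rw [min_eq_left h]
        have : 0 ≤ m i * R := by positivity
        linarith
      · rw [min_eq_right h]
        linarith
  choose g' hgball hgclose using key
  refine ⟨fun p => ⟨g' p, hgball p⟩, ?_, ?_⟩
  · intro p q
    have hf := hdist p.1 q.1
    have htri := dist_dist_dist_le (f i p.1) (f i q.1) (g' p) (g' q)
    rw [Real.dist_eq] at htri
    have hdpq : dist p.1 q.1 ≤ 2 * R := by
      have hp : dist p.1 (x i) < R := Metric.mem_ball.mp p.2
      have hq : dist q.1 (x i) < R := Metric.mem_ball.mp q.2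
      have := dist_triangle p.1 (x i) q.1
      rw [dist_comm (x i) q.1] at this
      linarith
    have hgoal : dist (⟨g' p, hgball p⟩ : Metric.ball z R) ⟨g' q, hgball q⟩
        = dist (g' p) (g' q) := Subtype.dist_eq _ _
    rw [Subtype.dist_eq p q, hgoal]
    have habs := abs_sub_le (dist p.1 q.1) (dist (f i p.1) (f i q.1)) (dist (g' p) (g' q))
    have hmd : m i * dist p.1 q.1 ≤ ε * (2 * R) :=
      mul_le_mul hMε.le hdpq dist_nonneg hε.le
    have hcp : dist (f i p.1) (g' p) ≤ m i * R + c i + ε := by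
      rw [dist_comm]; exact hgclose p
    have hcq : dist (f i q.1) (g' q) ≤ m i * R + c i + ε := by
      rw [dist_comm]; exact hgclose q
    have hbound : |dist p.1 q.1 - dist (g' p) (g' q)| ≤ ε * (2 * R) + ε + 2 * (ε * R + ε + ε) := by
      calc |dist p.1 q.1 - dist (g' p) (g' q)|
          ≤ |dist p.1 q.1 - dist (f i p.1) (f i q.1)|
            + |dist (f i p.1) (f i q.1) - dist (g' p) (g' q)| := habs
        _ ≤ (m i * dist p.1 q.1 + c i) + (dist (f i p.1) (g' p) + dist (f i q.1) (g' q)) := by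
            linarith
        _ ≤ ε * (2 * R) + ε + 2 * (ε * R + ε + ε) := by linarith
    have hfin : ε * (2 * R) + ε + 2 * (ε * R + ε + ε) ≤ ε * (8 * R + 26) := by nlinarith
    linarith
  · intro u
    obtain ⟨w', hw'⟩ := hnet u.1
    have hu : dist u.1 z < R := Metric.mem_ball.mp u.2
    have hzf : dist z (f i w') ≤ R + c i := by
      have h := dist_triangle z u.1 (f i w')
      rw [dist_comm z u.1] at h
      linarith
    have hd1 : dist (x i) w' ≤ dist z (f i w') + m i * dist (x i) w' + c i := by
      have h := hdist (x i) w'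
      rw [hbase i] at h
      linarith [(abs_le.mp h).2]
    have hDcrude : dist (x i) w' ≤ 2 * R + 2 := by
      nlinarith [dist_nonneg (x := x i) (y := w'),
        mul_nonneg (show (0:ℝ) ≤ 1 / 2 - m i by linarith) (dist_nonneg (x := x i) (y := w'))]
    have hD : dist (x i) w' ≤ R + ε * (2 * R + 4) := by
      have hmD : m i * dist (x i) w' ≤ ε * (2 * R + 2) :=
        mul_le_mul hMε.le hDcrude dist_nonneg hε.le
      nlinarith
    obtain ⟨w, hw1, hw2⟩ := pull_aux (hgeo i) (x i) w' (R - ε) (by linarith)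
    have hwball : w ∈ Metric.ball (x i) R := by
      rw [Metric.mem_ball, dist_comm, hw1]
      exact lt_of_le_of_lt (min_le_right _ _) (by linarith)
    have hww' : dist w w' ≤ ε * (2 * R + 5) := by
      rw [hw2]
      rcases le_total (dist (x i) w') (R - ε) with h | h
      · rw [min_eq_left h]
        nlinarith
      · rw [min_eq_right h]
        nlinarith
    refine ⟨⟨w, hwball⟩, ?_⟩
    rw [Subtype.dist_eq]
    have hfw : dist (f i w') (f i w) ≤ dist w' w + m i * dist w' w + c i := by
      have h := hdist w' w
      linarith [(abs_le.mp h).1]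
    have hg := hgclose ⟨w, hwball⟩
    have htri := dist_triangle4 u.1 (f i w') (f i w) (g' ⟨w, hwball⟩)
    have hww'' : dist w' w ≤ ε * (2 * R + 5) := by rw [dist_comm]; exact hww'
    have hmw : m i * dist w' w ≤ ε * (ε * (2 * R + 5)) :=
      mul_le_mul hMε.le hww'' dist_nonneg hε.le
    have hsmall : ε * (ε * (2 * R + 5)) ≤ (1 / 2) * (ε * (2 * R + 5)) :=
      mul_le_mul_of_nonneg_right hεhalf (by positivity)
    have hfwg : dist (f i w) (g' ⟨w, hwball⟩) ≤ m i * R + c i + ε := by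
      rw [dist_comm]; exact hg
    have hfin : dist u.1 (g' ⟨w, hwball⟩)
        ≤ ε + (ε * (2 * R + 5) + (1 / 2) * (ε * (2 * R + 5)) + ε) + (ε * R + ε + ε) := by
      linarith
    have heq : ε + (ε * (2 * R + 5) + (1 / 2) * (ε * (2 * R + 5)) + ε) + (ε * R + ε + ε)
        = ε * (4 * R + 23 / 2) := by ring
    have hlast : ε * (4 * R + 23 / 2) ≤ ε * (8 * R + 26) :=
      mul_le_mul_of_nonneg_left (by linarith) hε.le
    linarith
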